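/- Let the problem have Property (P). Then the problem suffers from the curse of dimensionality if and only if h_k = 1 for all k. -/

import Mathlib

open Filter Real Set

/-- Information complexity: the number of multi-indices `(j₁,…,j_d) ∈ ℕ^d`
(here 0-indexed, so `Λ k j` stands for `λ(k+1, j+1)`) whose eigenvalue product exceeds `ε²`. -/
noncomputable def infoCount (Λ : ℕ → ℕ → ℝ) (d : ℕ) (ε : ℝ) : ℕ :=
  Nat.card {j : Fin d → ℕ | ε ^ 2 < ∏ k : Fin d, Λ k.val (j k)}

/-- Strong polynomial tractability. -/
def IsSPT (Λ : ℕ → ℕ → ℝ) : Prop :=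
  ∃ C p : ℝ, 0 ≤ C ∧ 0 ≤ p ∧ ∀ d : ℕ, 1 ≤ d → ∀ ε : ℝ, ε ∈ Set.Ioo (0 : ℝ) 1 →
    (infoCount Λ d ε : ℝ) ≤ C * ε ^ (-p)

/-- The exponent `p*` of strong polynomial tractability. -/
noncomputable def sptExponent (Λ : ℕ → ℕ → ℝ) : ℝ :=
  sInf {p : ℝ | 0 ≤ p ∧ ∃ C : ℝ, 0 ≤ C ∧ ∀ d : ℕ, 1 ≤ d → ∀ ε : ℝ, ε ∈ Set.Ioo (0 : ℝ) 1 →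
    (infoCount Λ d ε : ℝ) ≤ C * ε ^ (-p)}

/-- Polynomial tractability. -/
def IsPT (Λ : ℕ → ℕ → ℝ) : Prop :=
  ∃ C p q : ℝ, 0 ≤ C ∧ 0 ≤ p ∧ 0 ≤ q ∧ ∀ d : ℕ, 1 ≤ d → ∀ ε : ℝ, ε ∈ Set.Ioo (0 : ℝ) 1 →
    (infoCount Λ d ε : ℝ) ≤ C * (d : ℝ) ^ q * ε ^ (-p)

/-- Quasi-polynomial tractability. -/
def IsQPT (Λ : ℕ → ℕ → ℝ) : Prop :=
  ∃ C t : ℝ, 0 < C ∧ 0 < t ∧ ∀ d : ℕ, 1 ≤ d → ∀ ε : ℝ, ε ∈ Set.Ioo (0 : ℝ) 1 →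
    (infoCount Λ d ε : ℝ) ≤ C * Real.exp (t * (1 + Real.log d) * (1 + Real.log ε⁻¹))

/-- The exponent `t*` of quasi-polynomial tractability. -/
noncomputable def qptExponent (Λ : ℕ → ℕ → ℝ) : ℝ :=
  sInf {t : ℝ | 0 < t ∧ ∃ C : ℝ, 0 < C ∧ ∀ d : ℕ, 1 ≤ d → ∀ ε : ℝ, ε ∈ Set.Ioo (0 : ℝ) 1 →
    (infoCount Λ d ε : ℝ) ≤ C * Real.exp (t * (1 + Real.log d) * (1 + Real.log ε⁻¹))}

/-- The filter describing `ε⁻¹ + d → ∞` over pairs `(ε, d)` with `ε ∈ (0,1)` and `d ≥ 1`. -/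
noncomputable def wtFilter : Filter (ℝ × ℕ) :=
  (Filter.comap (fun p : ℝ × ℕ => p.1⁻¹ + (p.2 : ℝ)) Filter.atTop) ⊓
    Filter.principal {p : ℝ × ℕ | p.1 ∈ Set.Ioo (0 : ℝ) 1 ∧ 1 ≤ p.2}

/-- `(s,t)`-weak tractability: `ln n(ε,d) / (ε^{-s} + d^t) → 0` as `ε⁻¹ + d → ∞`. -/
def IsWT (Λ : ℕ → ℕ → ℝ) (s t : ℝ) : Prop :=
  Filter.Tendsto
    (fun p : ℝ × ℕ => Real.log (infoCount Λ p.2 p.1) / (p.1 ^ (-s) + (p.2 : ℝ) ^ t))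
    wtFilter (nhds 0)

/-- Uniform weak tractability. -/
def IsUWT (Λ : ℕ → ℕ → ℝ) : Prop := ∀ s t : ℝ, 0 < s → 0 < t → IsWT Λ s t

/-- The problem suffers from the curse of dimensionality. -/
def SuffersCurse (Λ : ℕ → ℕ → ℝ) : Prop :=
  ∃ C ε₀ α : ℝ, 0 < C ∧ 0 < ε₀ ∧ 0 < α ∧ ∀ ε : ℝ, 0 < ε → ε ≤ ε₀ →
    {d : ℕ | C * (1 + α) ^ d ≤ (infoCount Λ d ε : ℝ)}.Infinite

/-- Condition (3) of Property (P) for a given `τ > 0`: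
`H(k,τ) = ∑_{j≥2} (λ(k,j)/λ(k,2))^τ` is finite for each `k` and
`sup_k H(k,τ) = H(1,τ)` (equivalently `H(k,τ) ≤ H(1,τ)` for all `k`). -/
def Cond3 (Λ : ℕ → ℕ → ℝ) (τ : ℝ) : Prop :=
  0 < τ ∧ (∀ k, Summable fun j : ℕ => (Λ k (j + 1) / Λ k 1) ^ τ) ∧
    ∀ k, (∑' j : ℕ, (Λ k (j + 1) / Λ k 1) ^ τ) ≤ ∑' j : ℕ, (Λ 0 (j + 1) / Λ 0 1) ^ τ

/-- `τ₀`: the infimum of all `τ` satisfying Condition (3). -/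
noncomputable def tau0 (Λ : ℕ → ℕ → ℝ) : ℝ := sInf {τ : ℝ | Cond3 Λ τ}

/-- Property (P): each sequence `λ(k,·)` is nonincreasing and nonnegative with `λ(k,1) = 1`
and `λ(k,2) > 0`, `h_k = λ(k,2)` is nonincreasing, and Condition (3) holds for some `τ > 0`. -/
structure PropertyP (Λ : ℕ → ℕ → ℝ) : Prop where
  nonneg : ∀ k j, 0 ≤ Λ k j
  anti : ∀ k, Antitone (Λ k)
  first : ∀ k, Λ k 0 = 1
  second_pos : ∀ k, 0 < Λ k 1
  h_anti : Antitone fun k => Λ k 1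
  cond3 : ∃ τ : ℝ, Cond3 Λ τ

variable {Λ : ℕ → ℕ → ℝ}

lemma lam_le_one (hP : PropertyP Λ) (k j : ℕ) : Λ k j ≤ 1 := by
  rw [← hP.first k]; exact hP.anti k (Nat.zero_le j)

lemma factor_gt (hP : PropertyP Λ) {d : ℕ} {j : Fin d → ℕ} {c : ℝ}
    (hc : c < ∏ k : Fin d, Λ k.val (j k)) (k0 : Fin d) : c < Λ k0.val (j k0) := by
  refine lt_of_lt_of_le hc ?_
  calc ∏ k : Fin d, Λ k.val (j k)
      = Λ k0.val (j k0) * ∏ k ∈ Finset.univ.erase k0, Λ k.val (j k) :=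
        (Finset.mul_prod_erase _ _ (Finset.mem_univ k0)).symm
    _ ≤ Λ k0.val (j k0) * 1 := by
        refine mul_le_mul_of_nonneg_left ?_ (hP.nonneg _ _)
        exact Finset.prod_le_one (fun i _ => hP.nonneg _ _) (fun i _ => lam_le_one hP _ _)
    _ = _ := mul_one _

lemma coord_finite (hP : PropertyP Λ) (k : ℕ) {c : ℝ} (hc : 0 < c) :
    {i : ℕ | c < Λ k i}.Finite := by
  by_contra hinf
  have hinf2 : {i : ℕ | c < Λ k i}.Infinite := hinf
  have hall : ∀ i, c < Λ k i := by
    intro i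
    obtain ⟨b, hb, hib⟩ := hinf2.exists_gt i
    exact lt_of_lt_of_le hb (hP.anti k hib.le)
  obtain ⟨τ, hτpos, hsum, _⟩ := hP.cond3
  have hk := hP.second_pos k
  have hratio : 0 < (c / Λ k 1) ^ τ := rpow_pos_of_pos (div_pos hc hk) τ
  have hev := ((hsum k).tendsto_atTop_zero).eventually_lt_const hratio
  obtain ⟨i, hi⟩ := hev.exists
  have : (c / Λ k 1) ^ τ ≤ (Λ k (i + 1) / Λ k 1) ^ τ := by
    refine Real.rpow_le_rpow (div_nonneg hc.le hk.le) ?_ hτpos.le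
    gcongr
    exact (hall (i + 1)).le
  linarith

lemma infoSet_finite (hP : PropertyP Λ) (d : ℕ) {ε : ℝ} (hε : 0 < ε) :
    {j : Fin d → ℕ | ε ^ 2 < ∏ k : Fin d, Λ k.val (j k)}.Finite := by
  have hc : 0 < ε ^ 2 := pow_pos hε 2
  have hsub : {j : Fin d → ℕ | ε ^ 2 < ∏ k : Fin d, Λ k.val (j k)} ⊆
      Set.pi Set.univ (fun k : Fin d => {i : ℕ | ε ^ 2 < Λ k.val i}) :=
    fun j hj k _ => factor_gt hP hj k
  exact (Set.Finite.pi (fun k => coord_finite hP _ hc)).subset hsub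

lemma factor_bound (hP : PropertyP Λ) {τ T : ℝ} (hτ : Cond3 Λ τ) (hT : τ ≤ T) (k N : ℕ) :
    ∑ i ∈ Finset.range (N + 1), Λ k i ^ T ≤
      1 + Λ k 1 ^ T * ∑' j : ℕ, (Λ 0 (j + 1) / Λ 0 1) ^ τ := by
  obtain ⟨hτpos, hsum, hbd⟩ := hτ
  have hk := hP.second_pos k
  have hT0 : 0 < T := lt_of_lt_of_le hτpos hT
  rw [Finset.sum_range_succ', hP.first, Real.one_rpow]
  have hH0 : 0 ≤ ∑' j : ℕ, (Λ 0 (j + 1) / Λ 0 1) ^ τ :=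
    tsum_nonneg fun j => Real.rpow_nonneg (div_nonneg (hP.nonneg _ _) (hP.second_pos 0).le) τ
  have hmain : ∑ i ∈ Finset.range N, Λ k (i + 1) ^ T ≤
      Λ k 1 ^ T * ∑' j : ℕ, (Λ 0 (j + 1) / Λ 0 1) ^ τ := ?_
  · linarith
  have h1 : ∀ i : ℕ, Λ k (i + 1) ^ T ≤ Λ k 1 ^ T * (Λ k (i + 1) / Λ k 1) ^ τ := by
    intro i
    have hr0 : 0 ≤ Λ k (i + 1) / Λ k 1 := div_nonneg (hP.nonneg _ _) hk.le
    have heq : Λ k (i + 1) = Λ k 1 * (Λ k (i + 1) / Λ k 1) := by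
      field_simp
    rcases eq_or_lt_of_le hr0 with h0 | hpos
    · have hz : Λ k (i + 1) = 0 := by rw [heq, ← h0, mul_zero]
      rw [hz, Real.zero_rpow hT0.ne']
      positivity
    · have hr1 : Λ k (i + 1) / Λ k 1 ≤ 1 :=
        (div_le_one hk).mpr (hP.anti k (Nat.one_le_iff_ne_zero.mpr (Nat.succ_ne_zero i)))
      calc Λ k (i + 1) ^ T = (Λ k 1 * (Λ k (i + 1) / Λ k 1)) ^ T := by rw [← heq]
        _ = Λ k 1 ^ T * (Λ k (i + 1) / Λ k 1) ^ T := Real.mul_rpow hk.le hr0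
        _ ≤ Λ k 1 ^ T * (Λ k (i + 1) / Λ k 1) ^ τ := by
            exact mul_le_mul_of_nonneg_left
              (Real.rpow_le_rpow_of_exponent_ge hpos hr1 hT)
              (Real.rpow_nonneg hk.le T)
  calc ∑ i ∈ Finset.range N, Λ k (i + 1) ^ T
      ≤ ∑ i ∈ Finset.range N, Λ k 1 ^ T * (Λ k (i + 1) / Λ k 1) ^ τ :=
        Finset.sum_le_sum fun i _ => h1 i
    _ = Λ k 1 ^ T * ∑ i ∈ Finset.range N, (Λ k (i + 1) / Λ k 1) ^ τ := by
        rw [Finset.mul_sum]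
    _ ≤ Λ k 1 ^ T * ∑' j : ℕ, (Λ k (j + 1) / Λ k 1) ^ τ := by
        refine mul_le_mul_of_nonneg_left ?_ (Real.rpow_nonneg hk.le T)
        exact Summable.sum_le_tsum _ (fun i _ => Real.rpow_nonneg (div_nonneg (hP.nonneg _ _) hk.le) τ)
          (hsum k)
    _ ≤ Λ k 1 ^ T * ∑' j : ℕ, (Λ 0 (j + 1) / Λ 0 1) ^ τ :=
        mul_le_mul_of_nonneg_left (hbd k) (Real.rpow_nonneg hk.le T)



set_option maxHeartbeats 1000000 in
lemma cheb (hP : PropertyP Λ) {τ T : ℝ} (hτ : Cond3 Λ τ) (hT : τ ≤ T)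
    (d : ℕ) {ε : ℝ} (hε : 0 < ε) :
    (ε ^ 2) ^ T * (infoCount Λ d ε : ℝ) ≤
      ∏ k : Fin d, (1 + Λ k.val 1 ^ T * ∑' j : ℕ, (Λ 0 (j + 1) / Λ 0 1) ^ τ) := by
  have hT0 : 0 < T := lt_of_lt_of_le hτ.1 hT
  have hfin := infoSet_finite hP d hε
  have hcard : (infoCount Λ d ε : ℕ) = hfin.toFinset.card := by
    rw [infoCount, Nat.card_coe_set_eq, Set.ncard_eq_toFinset_card _ hfin]
  set F := hfin.toFinset with hF
  set N := F.sup (fun j => Finset.univ.sup j) with hNdef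
  have hmem : ∀ j ∈ F, ε ^ 2 < ∏ k : Fin d, Λ k.val (j k) := fun j hj =>
    (Set.Finite.mem_toFinset hfin).mp hj
  have hbox : F ⊆ Fintype.piFinset (fun _ : Fin d => Finset.range (N + 1)) := by
    intro j hj
    rw [Fintype.mem_piFinset]
    intro k
    rw [Finset.mem_range, Nat.lt_succ_iff]
    exact le_trans (Finset.le_sup (Finset.mem_univ k)) (Finset.le_sup hj)
  calc (ε ^ 2) ^ T * (infoCount Λ d ε : ℝ)
      = ∑ _j ∈ F, (ε ^ 2) ^ T := by
        rw [Finset.sum_const, nsmul_eq_mul, mul_comm, hcard]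
    _ ≤ ∑ j ∈ F, ∏ k : Fin d, Λ k.val (j k) ^ T := by
        refine Finset.sum_le_sum fun j hj => ?_
        rw [Real.finset_prod_rpow _ _ (fun k _ => hP.nonneg _ _)]
        exact Real.rpow_le_rpow (by positivity) (hmem j hj).le hT0.le
    _ ≤ ∑ j ∈ Fintype.piFinset (fun _ : Fin d => Finset.range (N + 1)),
          ∏ k : Fin d, Λ k.val (j k) ^ T :=
        Finset.sum_le_sum_of_subset_of_nonneg hbox fun j _ _ =>
          Finset.prod_nonneg fun k _ => Real.rpow_nonneg (hP.nonneg _ _) T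
    _ = ∏ k : Fin d, ∑ i ∈ Finset.range (N + 1), Λ k.val i ^ T :=
        (Finset.prod_univ_sum (fun _ : Fin d => Finset.range (N + 1)) (fun k i => Λ k.val i ^ T)).symm
    _ ≤ ∏ k : Fin d, (1 + Λ k.val 1 ^ T * ∑' j : ℕ, (Λ 0 (j + 1) / Λ 0 1) ^ τ) :=
        Finset.prod_le_prod
          (fun k _ => Finset.sum_nonneg fun i _ => Real.rpow_nonneg (hP.nonneg _ _) T)
          (fun k _ => factor_bound hP ⟨hτ.1, hτ.2.1, hτ.2.2⟩ hT k.val N)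


/-- Under Property (P), the problem suffers from the curse of dimensionality iff
`h_k = 1` for all `k`. -/
theorem curse_iff_h_eq_one (Λ : ℕ → ℕ → ℝ) (hP : PropertyP Λ) :
    SuffersCurse Λ ↔ ∀ k : ℕ, Λ k 1 = 1 := by
  constructor
  · intro hcurse
    by_contra hne
    push_neg at hne
    obtain ⟨K, hK⟩ := hne
    have hKlt : Λ K 1 < 1 := lt_of_le_of_ne (lam_le_one hP K 1) hK
    have hKpos := hP.second_pos K
    obtain ⟨C, ε₀, α, hC, hε₀, hα, hcur⟩ := hcurse
    obtain ⟨τ, hτ⟩ := hP.cond3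
    set H := ∑' j : ℕ, (Λ 0 (j + 1) / Λ 0 1) ^ τ with hHdef
    have hH0 : 0 ≤ H :=
      tsum_nonneg fun j => Real.rpow_nonneg (div_nonneg (hP.nonneg _ _) (hP.second_pos 0).le) τ
    set s := Real.sqrt (1 + α) with hsdef
    have hs1 : 1 < s := by
      nlinarith [Real.sq_sqrt (show (0:ℝ) ≤ 1 + α by linarith), Real.sqrt_nonneg (1 + α)]
    have hs2 : s ^ 2 = 1 + α := Real.sq_sqrt (by linarith)
    -- choose m with (Λ K 1)^m * ((Λ K 1)^τ * H + 1) < s - 1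
    have hden : (0:ℝ) < Λ K 1 ^ τ * H + 1 := by positivity
    obtain ⟨m, hm⟩ := exists_pow_lt_of_lt_one
      (div_pos (sub_pos.mpr hs1) hden) hKlt
    have hmm : Λ K 1 ^ (m:ℕ) * (Λ K 1 ^ τ * H) ≤ s - 1 := by
      have h1 : Λ K 1 ^ (m:ℕ) * (Λ K 1 ^ τ * H + 1) < s - 1 := by
        rw [← lt_div_iff₀ hden] at *
        exact hm
      nlinarith [pow_nonneg hKpos.le m, Real.rpow_nonneg hKpos.le τ]
    set T : ℝ := τ + m with hTdef
    have hT : τ ≤ T := le_add_of_nonneg_right (Nat.cast_nonneg m)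
    have hT0 : 0 < T := lt_of_lt_of_le hτ.1 hT
    have hKT : Λ K 1 ^ T = Λ K 1 ^ τ * Λ K 1 ^ (m:ℕ) := by
      rw [hTdef, Real.rpow_add hKpos, Real.rpow_natCast]
    -- factor bounds
    have hfac_all : ∀ k : ℕ, 1 + Λ k 1 ^ T * H ≤ 1 + H := by
      intro k
      have : Λ k 1 ^ T ≤ 1 :=
        Real.rpow_le_one (hP.second_pos k).le (lam_le_one hP k 1) hT0.le
      nlinarith
    have hfac_tail : ∀ k : ℕ, K ≤ k → 1 + Λ k 1 ^ T * H ≤ s := by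
      intro k hk
      have h1 : Λ k 1 ^ T ≤ Λ K 1 ^ T :=
        Real.rpow_le_rpow (hP.second_pos k).le (hP.h_anti hk) hT0.le
      have h2 : Λ K 1 ^ T * H ≤ s - 1 := by
        rw [hKT, mul_comm (Λ K 1 ^ τ), mul_assoc]
        exact hmm
      nlinarith
    -- product bound
    have hprod : ∀ d : ℕ, ∏ k : Fin d, (1 + Λ k.val 1 ^ T * H) ≤ (1 + H) ^ K * s ^ d := by
      intro d
      have step1 : ∏ k : Fin d, (1 + Λ k.val 1 ^ T * H) =
          ∏ k ∈ Finset.range d, (1 + Λ k 1 ^ T * H) :=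
        Fin.prod_univ_eq_prod_range (fun k => 1 + Λ k 1 ^ T * H) d
      rw [step1]
      calc ∏ k ∈ Finset.range d, (1 + Λ k 1 ^ T * H)
          ≤ ∏ k ∈ Finset.range d, ((if k < K then 1 + H else 1) * s) := by
            refine Finset.prod_le_prod (fun k _ => by
              have := mul_nonneg (Real.rpow_nonneg (hP.second_pos k).le T) hH0
              linarith) (fun k _ => ?_)
            split_ifs with hkK
            · exact le_trans (hfac_all k) (le_mul_of_one_le_right (by linarith) hs1.le)
            · rw [one_mul]; exact hfac_tail k (le_of_not_gt hkK)
        _ = (∏ k ∈ Finset.range d, (if k < K then 1 + H else 1)) * s ^ d := by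
            rw [Finset.prod_mul_distrib, Finset.prod_const, Finset.card_range]
        _ ≤ (1 + H) ^ K * s ^ d := by
            refine mul_le_mul_of_nonneg_right ?_ (by positivity)
            rw [Finset.prod_ite (fun _ => 1 + H) (fun _ => (1:ℝ)), Finset.prod_const,
              Finset.prod_const, one_pow, mul_one]
            refine pow_le_pow_right₀ (by linarith) ?_
            calc ((Finset.range d).filter (· < K)).card
                ≤ (Finset.range K).card := by
                  refine Finset.card_le_card fun x hx => ?_
                  rw [Finset.mem_filter] at hx
                  exact Finset.mem_range.mpr hx.2
              _ = K := Finset.card_range K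
    -- set ε
    set ε : ℝ := min ε₀ (1/2) with hεdef
    have hεpos : 0 < ε := lt_min hε₀ (by norm_num)
    have hinf := hcur ε hεpos (min_le_left _ _)
    set E : ℝ := (ε ^ 2) ^ T * C with hEdef
    have hE : 0 < E := mul_pos (Real.rpow_pos_of_pos (by positivity) T) hC
    -- for each d in the set, E * s^d ≤ (1+H)^K
    have hbound : ∀ d ∈ {d : ℕ | C * (1 + α) ^ d ≤ (infoCount Λ d ε : ℝ)},
        E * s ^ d ≤ (1 + H) ^ K := by
      intro d hd
      have h1 : (ε ^ 2) ^ T * (C * (1 + α) ^ d) ≤ (ε ^ 2) ^ T * (infoCount Λ d ε : ℝ) :=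
        mul_le_mul_of_nonneg_left hd (Real.rpow_nonneg (by positivity) T)
      have h2 := le_trans h1 (le_trans (cheb hP hτ hT d hεpos) (hprod d))
      have h3 : (1 + α) ^ d = s ^ d * s ^ d := by
        rw [← hs2, ← pow_mul, two_mul, pow_add]
      have hsd : (0:ℝ) < s ^ d := pow_pos (by linarith) d
      rw [h3] at h2
      have h4 : (E * s ^ d) * s ^ d ≤ ((1 + H) ^ K) * s ^ d := by
        calc (E * s ^ d) * s ^ d = (ε ^ 2) ^ T * (C * (s ^ d * s ^ d)) := by ring
          _ ≤ (1 + H) ^ K * s ^ d := h2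
      exact le_of_mul_le_mul_right h4 hsd
    -- contradiction
    have htend : Filter.Tendsto (fun d : ℕ => E * s ^ d) Filter.atTop Filter.atTop :=
      (tendsto_pow_atTop_atTop_of_one_lt hs1).const_mul_atTop hE
    obtain ⟨D, hD⟩ := (htend.eventually_gt_atTop ((1 + H) ^ K)).exists_forall_of_atTop
    obtain ⟨d, hd, hDd⟩ := hinf.exists_gt D
    exact absurd (hbound d hd) (not_le.mpr (hD d hDd.le))
  · intro h1
    refine ⟨1, 1/2, 1, one_pos, by norm_num, one_pos, ?_⟩
    intro ε hε hεle
    have hkey : ∀ d : ℕ, (1:ℝ) * (1 + 1) ^ d ≤ (infoCount Λ d ε : ℝ) := by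
      intro d
      have hfin := infoSet_finite hP d hε
      have : Finite ↥{j : Fin d → ℕ | ε ^ 2 < ∏ k : Fin d, Λ k.val (j k)} := hfin.to_subtype
      have hε2 : ε ^ 2 < 1 := by nlinarith
      have hmem : ∀ b : Fin d → Fin 2,
          (fun k => ((b k : ℕ))) ∈ {j : Fin d → ℕ | ε ^ 2 < ∏ k : Fin d, Λ k.val (j k)} := by
        intro b
        have hone : ∀ k : Fin d, Λ k.val ((b k : ℕ)) = 1 := by
          intro k
          have h2 : (b k : ℕ) = 0 ∨ (b k : ℕ) = 1 := by omega
          rcases h2 with h | h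
          · rw [h]; exact hP.first k.val
          · rw [h]; exact h1 k.val
        simp only [Set.mem_setOf_eq]
        rw [Finset.prod_congr rfl (fun k _ => hone k), Finset.prod_const_one]
        exact hε2
      set g : (Fin d → Fin 2) → ↥{j : Fin d → ℕ | ε ^ 2 < ∏ k : Fin d, Λ k.val (j k)} :=
        fun b => ⟨fun k => (b k : ℕ), hmem b⟩ with hg
      have hginj : Function.Injective g := by
        intro b₁ b₂ hb
        funext k
        have := congrArg (fun (x : ↥{j : Fin d → ℕ | ε ^ 2 < ∏ k : Fin d, Λ k.val (j k)}) =>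
          (x : Fin d → ℕ) k) hb
        exact Fin.ext this
      have hcard := Nat.card_le_card_of_injective g hginj
      rw [Nat.card_eq_fintype_card, Fintype.card_fun, Fintype.card_fin, Fintype.card_fin] at hcard
      have : ((2:ℕ) ^ d : ℝ) ≤ (infoCount Λ d ε : ℝ) := by
        rw [infoCount]
        exact_mod_cast hcard
      calc (1:ℝ) * (1 + 1) ^ d = ((2:ℕ) ^ d : ℝ) := by push_cast; ring
        _ ≤ _ := this
    have : {d : ℕ | (1:ℝ) * (1 + 1) ^ d ≤ (infoCount Λ d ε : ℝ)} = Set.univ :=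
      Set.eq_univ_of_forall hkey
    rw [this]
    exact Set.infinite_univ
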